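/- Let q be an odd prime, let ρ = sqrt(12/((q+1)(q-1))), and let p_1(x) = ρ(x - (q-1)/2). Then for every x ∈ {0, 1, ..., q-1}, p_1(x) = -(ρ/(2q)) Σ_{v=0}^{q-1} g(v) cos((2v+1)π(x+1/2)/q). -/

import Mathlib

open Finset Real

/-- `g(v) = cos(π(v+1/2)/q) / (sin(π(v+1/2)/q))²`. -/
noncomputable def gfun (q : ℕ) (v : ℤ) : ℝ :=
  Real.cos (π * ((v : ℝ) + 1 / 2) / q) / Real.sin (π * ((v : ℝ) + 1 / 2) / q) ^ 2

lemma sinpos (q v : ℕ) (hq : 0 < q) (hv : v < q) :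
    0 < Real.sin (π * ((v : ℝ) + 1 / 2) / q) := by
  have hq' : (0:ℝ) < q := by exact_mod_cast hq
  apply Real.sin_pos_of_pos_of_lt_pi
  · positivity
  · rw [div_lt_iff₀ hq']
    have h : (v:ℝ) + 1/2 < q := by
      have : (v:ℝ) + 1 ≤ q := by exact_mod_cast hv
      linarith
    nlinarith [Real.pi_pos]

lemma cos_sum_zero (q k : ℕ) (hk0 : 0 < k) (hk : k < q) :
    ∑ v ∈ Finset.range q, Real.cos ((k:ℝ) * π * (2*(v:ℝ)+1) / q) = 0 := by
  have hq : (0:ℝ) < q := by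
    have : 0 < q := lt_trans hk0 hk
    exact_mod_cast this
  have hs : 0 < Real.sin ((k:ℝ)*π/q) := by
    apply Real.sin_pos_of_pos_of_lt_pi
    · have h0 : (0:ℝ) < k := by exact_mod_cast hk0
      positivity
    · rw [div_lt_iff₀ hq]
      have h : (k:ℝ) < q := by exact_mod_cast hk
      nlinarith [Real.pi_pos]
  have key : ∀ v : ℕ, 2 * Real.sin ((k:ℝ)*π/q) * Real.cos ((k:ℝ)*π*(2*(v:ℝ)+1)/q)
      = Real.sin ((k:ℝ)*π*(2*((v+1:ℕ):ℝ))/q) - Real.sin ((k:ℝ)*π*(2*(v:ℝ))/q) := by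
    intro v
    rw [Real.sin_sub_sin]
    push_cast
    have h1 : ((k:ℝ)*π*(2*((v:ℝ)+1))/q - (k:ℝ)*π*(2*(v:ℝ))/q)/2 = (k:ℝ)*π/q := by
      field_simp; ring
    have h2 : ((k:ℝ)*π*(2*((v:ℝ)+1))/q + (k:ℝ)*π*(2*(v:ℝ))/q)/2 = (k:ℝ)*π*(2*(v:ℝ)+1)/q := by
      field_simp; ring
    rw [h1, h2]
    try ring
  have hsum : ∑ v ∈ Finset.range q, (2 * Real.sin ((k:ℝ)*π/q) * Real.cos ((k:ℝ)*π*(2*(v:ℝ)+1)/q))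
      = Real.sin ((k:ℝ)*π*(2*((q:ℕ):ℝ))/q) - Real.sin ((k:ℝ)*π*(2*((0:ℕ):ℝ))/q) := by
    simp_rw [key]
    exact Finset.sum_range_sub (fun v : ℕ => Real.sin ((k:ℝ)*π*(2*(v:ℝ))/q)) q
  have hz : Real.sin ((k:ℝ)*π*(2*((q:ℕ):ℝ))/q) = 0 := by
    have h3 : (k:ℝ)*π*(2*(q:ℝ))/q = ((2*k:ℕ):ℝ) * π := by push_cast; field_simp
    rw [h3, Real.sin_nat_mul_pi]
  rw [← Finset.mul_sum] at hsum
  simp only [hz, Nat.cast_zero, mul_zero, zero_div, Real.sin_zero, sub_zero] at hsum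
  rcases mul_eq_zero.mp hsum with h | h
  · rcases mul_eq_zero.mp h with h' | h'
    · norm_num at h'
    · exact absurd h' (ne_of_gt hs)
  · exact h

lemma dirichlet (q : ℕ) (hq : 0 < q) (m : ℕ) (hm : m < q) :
    ∑ v ∈ Finset.range q,
      Real.sin ((2*(m:ℝ)+1) * (π*((v:ℝ)+1/2)/q)) / Real.sin (π*((v:ℝ)+1/2)/q) = q := by
  induction m with
  | zero =>
    have h : ∀ v ∈ Finset.range q,
        Real.sin ((2*((0:ℕ):ℝ)+1) * (π*((v:ℝ)+1/2)/q)) / Real.sin (π*((v:ℝ)+1/2)/q) = 1 := by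
      intro v hv
      have hs := sinpos q v hq (Finset.mem_range.mp hv)
      rw [show (2*((0:ℕ):ℝ)+1) * (π*((v:ℝ)+1/2)/q) = π*((v:ℝ)+1/2)/q by push_cast; ring]
      exact div_self (ne_of_gt hs)
    rw [Finset.sum_congr rfl h, Finset.sum_const, Finset.card_range, nsmul_eq_mul, mul_one]
  | succ m ih =>
    have hm' : m < q := Nat.lt_of_succ_lt hm
    have key : ∀ v ∈ Finset.range q,
        Real.sin ((2*((m+1:ℕ):ℝ)+1) * (π*((v:ℝ)+1/2)/q)) / Real.sin (π*((v:ℝ)+1/2)/q)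
        = Real.sin ((2*(m:ℝ)+1) * (π*((v:ℝ)+1/2)/q)) / Real.sin (π*((v:ℝ)+1/2)/q)
          + 2 * Real.cos (((m+1:ℕ):ℝ) * π * (2*(v:ℝ)+1) / q) := by
      intro v hv
      have hs := sinpos q v hq (Finset.mem_range.mp hv)
      have hdiff : Real.sin ((2*((m+1:ℕ):ℝ)+1) * (π*((v:ℝ)+1/2)/q))
          - Real.sin ((2*(m:ℝ)+1) * (π*((v:ℝ)+1/2)/q))
          = 2 * Real.cos (((m+1:ℕ):ℝ) * π * (2*(v:ℝ)+1) / q) * Real.sin (π*((v:ℝ)+1/2)/q) := by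
        rw [Real.sin_sub_sin]
        push_cast
        have hq' : (q:ℝ) ≠ 0 := ne_of_gt (by exact_mod_cast hq)
        have h1 : ((2*((m:ℝ)+1)+1) * (π*((v:ℝ)+1/2)/q) - (2*(m:ℝ)+1) * (π*((v:ℝ)+1/2)/q))/2
            = π*((v:ℝ)+1/2)/q := by field_simp; ring
        have h2 : ((2*((m:ℝ)+1)+1) * (π*((v:ℝ)+1/2)/q) + (2*(m:ℝ)+1) * (π*((v:ℝ)+1/2)/q))/2
            = ((m:ℝ)+1) * π * (2*(v:ℝ)+1) / q := by field_simp; ring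
        rw [h1, h2]
        ring
      rw [show Real.sin ((2*((m+1:ℕ):ℝ)+1) * (π*((v:ℝ)+1/2)/q))
          = Real.sin ((2*(m:ℝ)+1) * (π*((v:ℝ)+1/2)/q))
            + 2 * Real.cos (((m+1:ℕ):ℝ) * π * (2*(v:ℝ)+1) / q) * Real.sin (π*((v:ℝ)+1/2)/q)
          from by linarith [hdiff], add_div,
        mul_div_cancel_right₀ _ (ne_of_gt hs)]
    rw [Finset.sum_congr rfl key, Finset.sum_add_distrib, ih hm', ← Finset.mul_sum,
      cos_sum_zero q (m+1) (Nat.succ_pos m) hm]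
    ring

noncomputable def Ffun (q m : ℕ) : ℝ :=
  ∑ v ∈ Finset.range q, Real.cos (2*(m:ℝ) * (π*((v:ℝ)+1/2)/q)) / Real.sin (π*((v:ℝ)+1/2)/q) ^ 2

lemma Fstep (q : ℕ) (hq : 0 < q) (m : ℕ) (hm : m < q) :
    Ffun q (m+1) = Ffun q m - 2*q := by
  have key : ∀ v ∈ Finset.range q,
      Real.cos (2*((m+1:ℕ):ℝ) * (π*((v:ℝ)+1/2)/q)) / Real.sin (π*((v:ℝ)+1/2)/q) ^ 2
      = Real.cos (2*(m:ℝ) * (π*((v:ℝ)+1/2)/q)) / Real.sin (π*((v:ℝ)+1/2)/q) ^ 2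
        - 2 * (Real.sin ((2*(m:ℝ)+1) * (π*((v:ℝ)+1/2)/q)) / Real.sin (π*((v:ℝ)+1/2)/q)) := by
    intro v hv
    have hs := sinpos q v hq (Finset.mem_range.mp hv)
    have hq' : (q:ℝ) ≠ 0 := ne_of_gt (by exact_mod_cast hq)
    have hdiff : Real.cos (2*(m:ℝ) * (π*((v:ℝ)+1/2)/q))
        - Real.cos (2*((m+1:ℕ):ℝ) * (π*((v:ℝ)+1/2)/q))
        = 2 * Real.sin ((2*(m:ℝ)+1) * (π*((v:ℝ)+1/2)/q)) * Real.sin (π*((v:ℝ)+1/2)/q) := by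
      rw [Real.cos_sub_cos]
      push_cast
      have h1 : (2*(m:ℝ) * (π*((v:ℝ)+1/2)/q) + 2*((m:ℝ)+1) * (π*((v:ℝ)+1/2)/q))/2
          = (2*(m:ℝ)+1) * (π*((v:ℝ)+1/2)/q) := by field_simp; ring
      have h2 : (2*(m:ℝ) * (π*((v:ℝ)+1/2)/q) - 2*((m:ℝ)+1) * (π*((v:ℝ)+1/2)/q))/2
          = -(π*((v:ℝ)+1/2)/q) := by field_simp; ring
      rw [h1, h2, Real.sin_neg]
      ring
    rw [show Real.cos (2*((m+1:ℕ):ℝ) * (π*((v:ℝ)+1/2)/q))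
        = Real.cos (2*(m:ℝ) * (π*((v:ℝ)+1/2)/q))
          - 2 * Real.sin ((2*(m:ℝ)+1) * (π*((v:ℝ)+1/2)/q)) * Real.sin (π*((v:ℝ)+1/2)/q)
        from by linarith [hdiff], sub_div]
    congr 1
    rw [pow_two, mul_div_assoc, div_mul_eq_div_div, div_self (ne_of_gt hs)]
    ring
  rw [Ffun, Finset.sum_congr rfl key, Finset.sum_sub_distrib, ← Finset.mul_sum,
    dirichlet q hq m hm]
  rfl

lemma Fval (q : ℕ) (hq : 0 < q) (m : ℕ) (hm : m ≤ q) :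
    Ffun q m = Ffun q 0 - 2*q*m := by
  induction m with
  | zero => simp
  | succ m ih =>
    have hm' : m < q := hm
    rw [Fstep q hq m hm', ih (le_of_lt hm')]
    push_cast
    ring

lemma Ssum (q : ℕ) (hq : 0 < q) (x : ℕ) :
    ∑ v ∈ Finset.range q,
        Real.cos (π*((v:ℝ)+1/2)/q) / Real.sin (π*((v:ℝ)+1/2)/q) ^ 2
          * Real.cos ((2*(x:ℝ)+1) * (π*((v:ℝ)+1/2)/q))
      = (Ffun q x + Ffun q (x+1)) / 2 := by
  rw [Ffun, Ffun, ← Finset.sum_add_distrib, Finset.sum_div]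
  refine Finset.sum_congr rfl (fun v hv => ?_)
  have h : 2 * (Real.cos (π*((v:ℝ)+1/2)/q) * Real.cos ((2*(x:ℝ)+1) * (π*((v:ℝ)+1/2)/q)))
      = Real.cos (2*(x:ℝ) * (π*((v:ℝ)+1/2)/q)) + Real.cos (2*((x+1:ℕ):ℝ) * (π*((v:ℝ)+1/2)/q)) := by
    have e1 : 2*(x:ℝ) * (π*((v:ℝ)+1/2)/q)
        = (2*(x:ℝ)+1) * (π*((v:ℝ)+1/2)/q) - π*((v:ℝ)+1/2)/q := by ring
    have e2 : 2*((x+1:ℕ):ℝ) * (π*((v:ℝ)+1/2)/q)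
        = (2*(x:ℝ)+1) * (π*((v:ℝ)+1/2)/q) + π*((v:ℝ)+1/2)/q := by push_cast; ring
    rw [e1, e2, Real.cos_sub, Real.cos_add]
    ring
  rw [← add_div, ← h]
  ring

lemma Smid (q : ℕ) (hodd : Odd q) :
    ∑ v ∈ Finset.range q,
        Real.cos (π*((v:ℝ)+1/2)/q) / Real.sin (π*((v:ℝ)+1/2)/q) ^ 2
          * Real.cos ((2*(((q-1)/2 : ℕ):ℝ)+1) * (π*((v:ℝ)+1/2)/q)) = 0 := by
  obtain ⟨t, ht⟩ := hodd
  have h1 : (q-1)/2 = t := by omega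
  have h2 : (2*(((q-1)/2 : ℕ):ℝ)+1) = (q:ℝ) := by
    rw [h1]
    have h3 : (q:ℝ) = 2*(t:ℝ)+1 := by exact_mod_cast ht
    rw [h3]
  apply Finset.sum_eq_zero
  intro v hv
  have hq0 : q ≠ 0 := by omega
  have hq' : (q:ℝ) ≠ 0 := Nat.cast_ne_zero.mpr hq0
  have h3 : (q:ℝ) * (π*((v:ℝ)+1/2)/q) = (v:ℝ)*π + π/2 := by field_simp
  rw [h2, h3, Real.cos_add, Real.cos_pi_div_two, Real.sin_pi_div_two]
  have h4 : Real.sin ((v:ℝ)*π) = 0 := by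
    have h5 := Real.sin_nat_mul_pi v
    simpa using h5
  rw [h4]
  ring

lemma Svalue (q : ℕ) (hq : 0 < q) (hodd : Odd q) (x : ℕ) (hx : x < q) :
    ∑ v ∈ Finset.range q,
        Real.cos (π*((v:ℝ)+1/2)/q) / Real.sin (π*((v:ℝ)+1/2)/q) ^ 2
          * Real.cos ((2*(x:ℝ)+1) * (π*((v:ℝ)+1/2)/q))
      = (q:ℝ)*((q:ℝ)-1) - 2*q*x := by
  obtain ⟨t, ht⟩ := hodd
  have hmid := Smid q ⟨t, ht⟩
  rw [Ssum q hq ((q-1)/2)] at hmid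
  rw [Fval q hq ((q-1)/2) (by omega), Fval q hq ((q-1)/2+1) (by omega)] at hmid
  have hc : (((q-1)/2 : ℕ):ℝ) = ((q:ℝ)-1)/2 := by
    have h1 : (q-1)/2 = t := by omega
    have h2 : (q:ℝ) = 2*(t:ℝ)+1 := by exact_mod_cast ht
    rw [h1, h2]; ring
  push_cast at hmid
  rw [hc] at hmid
  have hF0 : Ffun q 0 = (q:ℝ)*(q:ℝ) := by nlinarith [hmid]
  rw [Ssum q hq x, Fval q hq x (le_of_lt hx), Fval q hq (x+1) hx, hF0]
  push_cast
  ring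

/-- Lemma 6: For an odd prime `q`, with `ρ = √(12/((q+1)(q-1)))` and
`p₁(x) = ρ(x - (q-1)/2)`, for every `x ∈ {0, ..., q-1}`,
`p₁(x) = -(ρ/(2q)) ∑_{v=0}^{q-1} g(v) cos((2v+1)π(x+1/2)/q)`. -/
theorem statement8 (q : ℕ) (hq : q.Prime) (hodd : Odd q) (x : ℕ) (hx : x < q) :
    Real.sqrt (12 / (((q : ℝ) + 1) * ((q : ℝ) - 1))) * ((x : ℝ) - ((q : ℝ) - 1) / 2) =
      -(Real.sqrt (12 / (((q : ℝ) + 1) * ((q : ℝ) - 1))) / (2 * q)) *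
        ∑ v ∈ Finset.range q,
          gfun q v * Real.cos ((2 * (v : ℝ) + 1) * π * ((x : ℝ) + 1 / 2) / q) := by
  have hq0 : 0 < q := hq.pos
  have hq' : (q:ℝ) ≠ 0 := Nat.cast_ne_zero.mpr hq0.ne'
  have hsum : ∑ v ∈ Finset.range q,
      gfun q v * Real.cos ((2 * (v : ℝ) + 1) * π * ((x : ℝ) + 1 / 2) / q)
      = ∑ v ∈ Finset.range q,
        Real.cos (π*((v:ℝ)+1/2)/q) / Real.sin (π*((v:ℝ)+1/2)/q) ^ 2
          * Real.cos ((2*(x:ℝ)+1) * (π*((v:ℝ)+1/2)/q)) := by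
    refine Finset.sum_congr rfl (fun v hv => ?_)
    rw [gfun]
    push_cast
    congr 2
    field_simp
  rw [hsum, Svalue q hq0 hodd x hx]
  have key : -((1:ℝ) / (2*(q:ℝ))) * ((q:ℝ)*((q:ℝ)-1) - 2*(q:ℝ)*(x:ℝ)) = (x:ℝ) - ((q:ℝ)-1)/2 := by
    field_simp
    ring
  calc Real.sqrt (12 / (((q : ℝ) + 1) * ((q : ℝ) - 1))) * ((x : ℝ) - ((q : ℝ) - 1) / 2)
      = Real.sqrt (12 / (((q : ℝ) + 1) * ((q : ℝ) - 1))) *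
        (-((1:ℝ) / (2*(q:ℝ))) * ((q:ℝ)*((q:ℝ)-1) - 2*(q:ℝ)*(x:ℝ))) := by rw [key]
    _ = -(Real.sqrt (12 / (((q : ℝ) + 1) * ((q : ℝ) - 1))) / (2 * q)) *
          ((q:ℝ)*((q:ℝ)-1) - 2*(q:ℝ)*(x:ℝ)) := by ring
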